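/- Let h be a finite set of pairwise commuting n-qubit Pauli observables whose product satisfies ∏_{o∈h} o = I^⊗n or ∏_{o∈h} o = −I^⊗n. Then every n-qubit Pauli observable anticommutes with an even number of elements of h. -/

import Mathlib

open scoped Classical
open Matrix

noncomputable section

/-- The space of `n`-qubit operators, realized as matrices indexed by
`Fin n → Fin 2` (the `n`-fold tensor-product index). -/
abbrev QMat (n : ℕ) := Matrix (Fin n → Fin 2) (Fin n → Fin 2) ℂ

/-- The four Pauli matrices `I, X, Y, Z`. -/
def pauliMat : Fin 4 → Matrix (Fin 2) (Fin 2) ℂ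
  | ⟨0, _⟩ => 1
  | ⟨1, _⟩ => !![0, 1; 1, 0]
  | ⟨2, _⟩ => !![0, -Complex.I; Complex.I, 0]
  | ⟨3, _⟩ => !![1, 0; 0, -1]

/-- The `n`-fold Kronecker (tensor) product `G₁ ⊗ ⋯ ⊗ Gₙ` of the Pauli matrices
selected by `g : Fin n → Fin 4`, as a matrix indexed by `Fin n → Fin 2`. -/
def nPauli {n : ℕ} (g : Fin n → Fin 4) : QMat n :=
  Matrix.of fun r c => ∏ k, pauliMat (g k) (r k) (c k)

/-- `M` is an `n`-qubit Pauli observable. -/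
def IsPauliObs (n : ℕ) (M : QMat n) : Prop := ∃ g : Fin n → Fin 4, M = nPauli g

/-- `I^⊗n`, the `n`-fold tensor product of the identity. -/
def idN (n : ℕ) : QMat n := nPauli (fun _ => ⟨0, by omega⟩)

/-- Product of `f` over a finite set of naturals, taken in increasing order
(well-defined without commutativity; agrees with the unordered product when the
factors pairwise commute). -/
def natFinsetProd {M : Type*} [Monoid M] (s : Finset ℕ) (f : ℕ → M) : M :=
  ((s.sort (· ≤ ·)).map f).prod

/-- `(V,H,G)` is a hypergram: `V` a nonempty finite vertex set, `H` a set of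
nonempty hyperedges covering `V`, `G` a set of 2-element edges on `V` forming a
simple reduced graph, no edge of `G` being contained in a hyperedge of `H`. -/
def IsHypergram (V : Finset ℕ) (H G : Finset (Finset ℕ)) : Prop :=
  V.Nonempty ∧
  (∀ h ∈ H, h ⊆ V ∧ h.Nonempty) ∧
  (∀ v ∈ V, ∃ h ∈ H, v ∈ h) ∧
  (∀ e ∈ G, e ⊆ V ∧ e.card = 2) ∧
  (∀ v ∈ V, ∃ e ∈ G, v ∈ e) ∧
  (∀ v ∈ V, ∀ w ∈ V,
    (∀ u ∈ V, (({v, u} : Finset ℕ) ∈ G ↔ ({w, u} : Finset ℕ) ∈ G)) → v = w) ∧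
  (∀ e ∈ G, ∀ h ∈ H, ¬ e ⊆ h)

/-- `α` is an `n`-qubit Pauli assignment of the hypergram `(V,H,G)`. -/
def IsPauliAssignment (V : Finset ℕ) (H G : Finset (Finset ℕ)) (n : ℕ)
    (α : ℕ → QMat n) : Prop :=
  (∀ v ∈ V, IsPauliObs n (α v)) ∧
  (∀ v ∈ V, α v ≠ idN n) ∧
  (∀ v₁ ∈ V, ∀ v₂ ∈ V, α v₁ = α v₂ → v₁ = v₂) ∧
  (∀ v₁ ∈ V, ∀ v₂ ∈ V, v₁ ≠ v₂ →
    (α v₁ * α v₂ = -(α v₂ * α v₁) ↔ ({v₁, v₂} : Finset ℕ) ∈ G)) ∧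
  (∀ h ∈ H, natFinsetProd h α = idN n ∨ natFinsetProd h α = -(idN n))

/-- The sign `sgn_α(h) ∈ {−1,1}` of a hyperedge `h`: `∏_{v∈h} α(v) = sgn_α(h)·I^⊗n`. -/
def quantumSgn {n : ℕ} (α : ℕ → QMat n) (h : Finset ℕ) : ℤ :=
  if natFinsetProd h α = idN n then 1 else -1

/-- The sign `sgn_a(h) = ∏_{v∈h} a(v)` of a hyperedge for a classical assignment. -/
def classicalSgn (a : ℕ → ℤ) (h : Finset ℕ) : ℤ := ∏ v ∈ h, a v

/-- The contextuality degree of a Pauli assignment: the minimum over classical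
assignments `a : V → {−1,1}` of the number of hyperedges whose signs differ. -/
def contextualityDegree {n : ℕ} (H : Finset (Finset ℕ)) (α : ℕ → QMat n) : ℕ :=
  sInf { d : ℕ | ∃ a : ℕ → ℤ, (∀ v, a v = 1 ∨ a v = -1) ∧
    d = (H.filter (fun h => quantumSgn α h ≠ classicalSgn a h)).card }

/-- The context (incidence) matrix of a hypergram over 𝔽₂. -/
def contextMatrix (V : Finset ℕ) (H : Finset (Finset ℕ)) :
    Matrix {h // h ∈ H} {v // v ∈ V} (ZMod 2) :=
  Matrix.of fun h v => if v.1 ∈ h.1 then 1 else 0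

/-- The anticommutation (adjacency) matrix of a hypergram over 𝔽₂. -/
def anticommMatrix (V : Finset ℕ) (G : Finset (Finset ℕ)) :
    Matrix {v // v ∈ V} {v // v ∈ V} (ZMod 2) :=
  Matrix.of fun i j => if ({i.1, j.1} : Finset ℕ) ∈ G then 1 else 0

/-- The standard symplectic form on `𝔽₂^{2n}`:
`⟨x,y⟩ = Σ_{k=1}^{n} (x_{2k−1} y_{2k} + x_{2k} y_{2k−1})`. -/
def sympForm (n : ℕ) (x y : Fin (2 * n) → ZMod 2) : ZMod 2 :=
  ∑ k : Fin n,
    (x ⟨2 * k.1, by have := k.2; omega⟩ * y ⟨2 * k.1 + 1, by have := k.2; omega⟩ +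
     x ⟨2 * k.1 + 1, by have := k.2; omega⟩ * y ⟨2 * k.1, by have := k.2; omega⟩)

/-- The single-qubit encoding `ψ(I)=(0,0), ψ(X)=(0,1), ψ(Y)=(1,1), ψ(Z)=(1,0)`. -/
def psi4 : Fin 4 → (ZMod 2) × (ZMod 2)
  | ⟨0, _⟩ => (0, 0)
  | ⟨1, _⟩ => (0, 1)
  | ⟨2, _⟩ => (1, 1)
  | ⟨3, _⟩ => (1, 0)

/-- The encoding `ψ` of an `n`-qubit Pauli observable (given by its tensor
factors `g`) as a vector of `𝔽₂^{2n}`, concatenating the per-factor encodings. -/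
def psiVec {n : ℕ} (g : Fin n → Fin 4) : Fin (2 * n) → ZMod 2 := fun idx =>
  if idx.1 % 2 = 0 then (psi4 (g ⟨idx.1 / 2, by have := idx.2; omega⟩)).1
  else (psi4 (g ⟨idx.1 / 2, by have := idx.2; omega⟩)).2

/-- All pairs of elements of `S` commute. -/
def PairComm {n : ℕ} (S : Finset (QMat n)) : Prop := ∀ a ∈ S, ∀ b ∈ S, a * b = b * a

/-- The (well-defined) product of a finite set of pairwise commuting matrices. -/
def commProd {n : ℕ} (S : Finset (QMat n)) (h : PairComm S) : QMat n :=
  S.noncommProd id (fun a ha b hb _ => h a ha b hb)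

/-- Pairwise commutation is inherited by subsets. -/
def pairCommOfSubset {n : ℕ} {S T : Finset (QMat n)} (hST : S ⊆ T) (h : PairComm T) :
    PairComm S := fun a ha b hb => h a (hST ha) b (hST hb)

/-- `Q` (pairwise commuting) is independent: no nonempty subset has product `±I^⊗n`. -/
def IsIndep {n : ℕ} (Q : Finset (QMat n)) (hQ : PairComm Q) : Prop :=
  ∀ S : Finset (QMat n), ∀ (hS : S ⊆ Q), S.Nonempty →
    commProd S (pairCommOfSubset hS hQ) ≠ idN n ∧
    commProd S (pairCommOfSubset hS hQ) ≠ -(idN n)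

/-- The vertex set `{1, …, 15}`. -/
def V15 : Finset ℕ := Finset.Icc 1 15

/-- The 15 lines of the doily. -/
def doilyLines : Finset (Finset ℕ) :=
  { {1,2,3}, {1,8,9}, {1,10,11}, {2,4,6}, {2,5,7}, {3,12,15}, {3,13,14},
    {4,8,12}, {4,10,14}, {5,8,13}, {5,10,15}, {6,9,15}, {6,11,13},
    {7,9,14}, {7,11,12} }

/-- The 10 lines of the two-spread `H_{2s}`. -/
def twoSpreadLines : Finset (Finset ℕ) :=
  { {1,2,3}, {1,10,11}, {2,4,6}, {3,13,14}, {4,8,12}, {5,8,13}, {5,10,15},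
    {6,9,15}, {7,9,14}, {7,11,12} }

/-- The anticommutation graph `G_d = G_{2s}`: pairs of distinct vertices not on a
common doily line. -/
def doilyG : Finset (Finset ℕ) :=
  (V15.powersetCard 2).filter (fun e => ∀ h ∈ doilyLines, ¬ e ⊆ h)




section Aux

lemma pauli_sq' (a : Fin 4) : pauliMat a * pauliMat a = 1 := by
  fin_cases a <;>
    · ext i j
      fin_cases i <;> fin_cases j <;>
        simp [pauliMat, Matrix.mul_apply, Fin.sum_univ_two, Matrix.one_apply, Complex.I_mul_I]

lemma pauli_swap' (a b : Fin 4) :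
    pauliMat a * pauliMat b = pauliMat b * pauliMat a ∨
    pauliMat a * pauliMat b = -(pauliMat b * pauliMat a) := by
  fin_cases a <;> fin_cases b <;>
    [ left; left; left; left;
      left; left; right; right;
      left; right; left; right;
      left; right; right; left] <;>
    · ext i j
      fin_cases i <;> fin_cases j <;>
        simp [pauliMat, Matrix.mul_apply, Fin.sum_univ_two, Matrix.neg_apply, Complex.I_mul_I]

lemma nPauli_mul' {n : ℕ} (g g' : Fin n → Fin 4) :
    nPauli g * nPauli g' =
      Matrix.of fun r c => ∏ k, (pauliMat (g k) * pauliMat (g' k)) (r k) (c k) := by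
  ext r c
  simp only [Matrix.mul_apply, nPauli, Matrix.of_apply, ← Finset.prod_mul_distrib]
  rw [Finset.prod_univ_sum]
  rfl

lemma nPauli_sq' {n : ℕ} (g : Fin n → Fin 4) : nPauli g * nPauli g = 1 := by
  rw [nPauli_mul']
  ext r c
  simp only [Matrix.of_apply, pauli_sq', Matrix.one_apply]
  by_cases hrc : r = c
  · subst hrc; simp
  · obtain ⟨k, hk⟩ := Function.ne_iff.mp hrc
    rw [if_neg hrc]
    exact Finset.prod_eq_zero (Finset.mem_univ k) (by simp [hk])

lemma nPauli_swap' {n : ℕ} (g g' : Fin n → Fin 4) :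
    ∃ ε : ℂ, (ε = 1 ∨ ε = -1) ∧ nPauli g * nPauli g' = ε • (nPauli g' * nPauli g) := by
  set ε : Fin n → ℂ := fun k =>
    if pauliMat (g k) * pauliMat (g' k) = pauliMat (g' k) * pauliMat (g k) then 1 else -1
    with hεdef
  have hε : ∀ k, ε k = 1 ∨ ε k = -1 := fun k => by
    by_cases hc : pauliMat (g k) * pauliMat (g' k) = pauliMat (g' k) * pauliMat (g k) <;>
      simp [hεdef, hc]
  have hswap : ∀ k, pauliMat (g k) * pauliMat (g' k)
      = ε k • (pauliMat (g' k) * pauliMat (g k)) := fun k => by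
    by_cases hc : pauliMat (g k) * pauliMat (g' k) = pauliMat (g' k) * pauliMat (g k)
    · simp [hεdef, hc]
    · rcases pauli_swap' (g k) (g' k) with h | h
      · exact absurd h hc
      · have hek : ε k = -1 := by simp [hεdef, hc]
        rw [hek, h]; simp
  refine ⟨∏ k, ε k, ?_, ?_⟩
  · rcases Finset.prod_induction ε (fun x => x = 1 ∨ x = -1)
      (by rintro a b (rfl|rfl) (rfl|rfl) <;> norm_num) (Or.inl rfl)
      (fun k _ => hε k) with h' | h'
    · exact Or.inl h'
    · exact Or.inr h'
  · rw [nPauli_mul', nPauli_mul' g']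
    ext r c
    simp only [Matrix.of_apply, Matrix.smul_apply, smul_eq_mul]
    rw [← Finset.prod_mul_distrib]
    refine Finset.prod_congr rfl fun k _ => ?_
    rw [hswap k]
    simp

lemma idN_eq_one' (n : ℕ) : idN n = 1 := by
  ext r c
  simp only [idN, nPauli, Matrix.of_apply, Matrix.one_apply]
  have h1 : ∀ k : Fin n, pauliMat ⟨0, by omega⟩ (r k) (c k) = if r k = c k then 1 else 0 := by
    intro k
    simp [pauliMat, Matrix.one_apply]
  rw [Finset.prod_congr rfl fun k _ => h1 k]
  by_cases hrc : r = c
  · subst hrc; simp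
  · obtain ⟨k, hk⟩ := Function.ne_iff.mp hrc
    rw [if_neg hrc]
    exact Finset.prod_eq_zero (Finset.mem_univ k) (by simp [hk])

lemma mulObs_ne_zero' {n : ℕ} {A B : QMat n} (hA : IsPauliObs n A) (hB : IsPauliObs n B) :
    A * B ≠ 0 := by
  obtain ⟨g, rfl⟩ := hA
  obtain ⟨g', rfl⟩ := hB
  intro h0
  have h1 : (nPauli g * nPauli g') * (nPauli g' * nPauli g) = 1 := by
    rw [mul_assoc, ← mul_assoc (nPauli g'), nPauli_sq', one_mul, nPauli_sq']
  rw [h0, zero_mul] at h1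
  exact zero_ne_one h1

lemma obs_swap' {n : ℕ} {A B : QMat n} (hA : IsPauliObs n A) (hB : IsPauliObs n B) :
    A * B = (if A * B = -(B * A) then (-1:ℂ) else 1) • (B * A) := by
  obtain ⟨g, hg⟩ := hA
  obtain ⟨g', hg'⟩ := hB
  obtain ⟨ε, hε1, hswap⟩ := nPauli_swap' g g'
  rw [← hg, ← hg'] at hswap
  by_cases hac : A * B = -(B * A)
  · rw [if_pos hac, hac]; simp
  · rw [if_neg hac]
    rcases hε1 with rfl | rfl
    · simpa using hswap
    · exfalso
      apply hac
      rw [hswap]; simp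

lemma key_induction {n : ℕ} (A : QMat n) (hA : IsPauliObs n A) :
    ∀ S : Finset (QMat n), ∀ hS : PairComm S, (∀ o ∈ S, IsPauliObs n o) →
      A * commProd S hS =
        ((-1:ℂ)^((S.filter (fun o => A * o = -(o * A))).card)) • (commProd S hS * A) := by
  intro S
  induction S using Finset.induction_on with
  | empty =>
      intro hS _
      simp [commProd, Finset.noncommProd_empty]
      exact (congrArg (A * ·) (Finset.noncommProd_empty _ _)).trans ((mul_one A).trans ((one_mul A).symm.trans (congrArg (· * A) (Finset.noncommProd_empty _ _).symm)))
  | @insert a s has ih =>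
      intro hS hObs
      have hScomm : PairComm s := fun x hx y hy =>
        hS x (Finset.mem_insert_of_mem hx) y (Finset.mem_insert_of_mem hy)
      have hprod : commProd (insert a s) hS = a * commProd s hScomm := by
        simp only [commProd]
        refine (Finset.noncommProd_insert_of_notMem _ _ _ _ has).trans ?_
        rfl
      have ihs := ih hScomm (fun o ho => hObs o (Finset.mem_insert_of_mem ho))
      have ha : IsPauliObs n a := hObs a (Finset.mem_insert_self a s)
      have hswap := obs_swap' hA ha
      rw [hprod, ← mul_assoc, hswap]
      rw [Finset.filter_insert]
      by_cases hac : A * a = -(a * A)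
      · simp only [if_pos hac] at hswap ⊢
        rw [Finset.card_insert_of_notMem (fun hmem => has (Finset.mem_of_mem_filter a hmem))]
        rw [smul_mul_assoc, mul_assoc, ihs, pow_succ, mul_smul_comm, smul_smul, mul_assoc]
        congr 1
        ring
      · simp only [if_neg hac] at hswap ⊢
        rw [smul_mul_assoc, one_smul, mul_assoc, ihs, mul_smul_comm, mul_assoc]

end Aux


/-- If a finite set `h` of pairwise commuting Pauli observables
has product `±I^⊗n`, then every Pauli observable anticommutes with an even
number of elements of `h`. -/
theorem even_anticommutations_with_context
    (n : ℕ) (h : Finset (QMat n))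
    (hObs : ∀ o ∈ h, IsPauliObs n o)
    (hcomm : PairComm h)
    (hprod : commProd h hcomm = idN n ∨ commProd h hcomm = -(idN n))
    (A : QMat n) (hA : IsPauliObs n A) :
    Even ((h.filter (fun o => A * o = -(o * A))).card) := by
  set k := (h.filter (fun o => A * o = -(o * A))).card with hk
  have hkey := key_induction A hA h hcomm hObs
  have hAA : A = ((-1:ℂ)^k) • A := by
    rcases hprod with hp | hp <;> rw [hp, idN_eq_one'] at hkey
    · simpa using hkey
    · have h2 : -A = ((-1:ℂ)^k) • (-A) := by simpa using hkey
      rw [smul_neg] at h2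
      exact neg_injective h2
  have hAne : A ≠ 0 := by
    obtain ⟨g, rfl⟩ := hA
    intro h0
    have := nPauli_sq' g
    rw [h0, zero_mul] at this
    exact zero_ne_one this
  have hsub : (((-1:ℂ)^k) - 1) • A = 0 := by
    rw [sub_smul, one_smul, ← hAA, sub_self]
  rcases smul_eq_zero.mp hsub with h1 | h1
  · have : ((-1:ℂ)^k) = 1 := by linear_combination h1
    exact (neg_one_pow_eq_one_iff_even (by norm_num : (-1:ℂ) ≠ 1)).mp this
  · exact absurd h1 hAne


end
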